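/- If ∇f₂(x) already lies in the hypercone C_{∇f₁(x)}^Δ (so u = ∇f₂(x)), then f₁(x + α u) ≥ f₁(x) + α ‖∇f₂(x)‖ (sin Δ ‖∇f₁(x)‖ − (Lα/2)‖∇f₂(x)‖); in particular f₁ does not decrease when α ≤ 2 sin Δ ‖∇f₁(x)‖ / (L ‖∇f₂(x)‖). -/

import Mathlib

open Real RealInnerProductSpace

lemma descent_lemma {n : ℕ} (f : EuclideanSpace ℝ (Fin n) → ℝ) (L : ℝ) (hLpos : 0 < L)
    (hd : Differentiable ℝ f)
    (hL : ∀ y z : EuclideanSpace ℝ (Fin n), ‖gradient f y - gradient f z‖ ≤ L * ‖y - z‖)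
    (x v : EuclideanSpace ℝ (Fin n)) :
    f (x + v) ≥ f x + ⟪gradient f x, v⟫ - L / 2 * ‖v‖ ^ 2 := by
  -- derivative of φ t = f (x + t • v)
  have hderiv : ∀ t : ℝ, HasDerivAt (fun t : ℝ => f (x + t • v))
      ⟪gradient f (x + t • v), v⟫ t := by
    intro t
    have hc : HasDerivAt (fun t : ℝ => x + t • v) v t := by
      simpa using ((hasDerivAt_id t).smul_const v).const_add x
    have hf := (hd (x + t • v)).hasGradientAt.hasFDerivAt
    have := hf.comp_hasDerivAt t hc
    simpa [Function.comp_def] using this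
  have hlip : LipschitzWith (Real.toNNReal L) (gradient f) := by
    apply LipschitzWith.of_dist_le_mul
    intro y z
    simpa [dist_eq_norm, Real.coe_toNNReal _ hLpos.le] using hL y z
  have hcont : Continuous fun t : ℝ => ⟪gradient f (x + t • v), v⟫ := by
    exact (Continuous.inner (hlip.continuous.comp (by continuity)) continuous_const)
  have hint : IntervalIntegrable (fun t : ℝ => ⟪gradient f (x + t • v), v⟫)
      MeasureTheory.volume 0 1 := hcont.intervalIntegrable 0 1
  have hFTC : f (x + v) - f x = ∫ t in (0:ℝ)..1, ⟪gradient f (x + t • v), v⟫ := by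
    have := intervalIntegral.integral_eq_sub_of_hasDerivAt
      (f := fun t : ℝ => f (x + t • v)) (a := 0) (b := 1)
      (fun t _ => hderiv t) hint
    simpa using this.symm
  have hbound : ∀ t ∈ Set.Icc (0:ℝ) 1,
      ⟪gradient f x, v⟫ - L * t * ‖v‖ ^ 2 ≤ ⟪gradient f (x + t • v), v⟫ := by
    intro t ht
    have h1 : ⟪gradient f (x + t • v), v⟫ =
        ⟪gradient f x, v⟫ + ⟪gradient f (x + t • v) - gradient f x, v⟫ := by
      rw [inner_sub_left]; ring
    have h2 : ‖gradient f (x + t • v) - gradient f x‖ ≤ L * (t * ‖v‖) := by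
      have := hL (x + t • v) x
      simpa [norm_smul, abs_of_nonneg ht.1] using this
    have h3 : |⟪gradient f (x + t • v) - gradient f x, v⟫| ≤ L * (t * ‖v‖) * ‖v‖ :=
      le_trans (abs_real_inner_le_norm _ _)
        (mul_le_mul_of_nonneg_right h2 (norm_nonneg _))
    rw [h1]
    have := abs_le.mp h3
    nlinarith [this.1]
  have hintlhs : (∫ t in (0:ℝ)..1, (⟪gradient f x, v⟫ - L * t * ‖v‖ ^ 2))
      = ⟪gradient f x, v⟫ - L / 2 * ‖v‖ ^ 2 := by
    have hc : Continuous fun t : ℝ => L * t * ‖v‖ ^ 2 :=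
      (continuous_const.mul continuous_id).mul continuous_const
    rw [intervalIntegral.integral_sub intervalIntegrable_const (hc.intervalIntegrable 0 1)]
    simp [intervalIntegral.integral_const, mul_comm, mul_assoc]
    ring
  have hc2 : Continuous fun t : ℝ => ⟪gradient f x, v⟫ - L * t * ‖v‖ ^ 2 :=
    continuous_const.sub ((continuous_const.mul continuous_id).mul continuous_const)
  have hmono := intervalIntegral.integral_mono_on (a := 0) (b := 1) (by norm_num)
    (hc2.intervalIntegrable 0 1) hint hbound
  rw [hintlhs] at hmono
  linarith [hFTC ▸ hmono]

/-- If `∇f₂(x)` already lies in the hypercone of `∇f₁(x)` (so `u = ∇f₂(x)`),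
then `f₁` does not decrease for a small enough step size. -/
theorem cone_member_step_preserves_f1 {n : ℕ} (f₁ f₂ : EuclideanSpace ℝ (Fin n) → ℝ)
    (L Δ α : ℝ) (x : EuclideanSpace ℝ (Fin n))
    (hdiff₁ : Differentiable ℝ f₁)
    (hconc₁ : ConcaveOn ℝ Set.univ f₁)
    (hL₁ : ∀ y z : EuclideanSpace ℝ (Fin n), ‖gradient f₁ y - gradient f₁ z‖ ≤ L * ‖y - z‖)
    (hLpos : 0 < L) (hg₂ : gradient f₂ x ≠ 0)
    (hΔ0 : 0 ≤ Δ) (hΔ1 : Δ ≤ π / 2)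
    (hcone : ⟪gradient f₁ x, gradient f₂ x⟫ ≥
      Real.sin Δ * ‖gradient f₁ x‖ * ‖gradient f₂ x‖)
    (hα : 0 ≤ α) :
    f₁ (x + α • gradient f₂ x) ≥ f₁ x + α * ‖gradient f₂ x‖ *
      (Real.sin Δ * ‖gradient f₁ x‖ - L * α / 2 * ‖gradient f₂ x‖) ∧
    (α ≤ 2 * Real.sin Δ * ‖gradient f₁ x‖ / (L * ‖gradient f₂ x‖) →
      f₁ (x + α • gradient f₂ x) ≥ f₁ x) := by
  set u := gradient f₂ x with hu
  have hmain := descent_lemma f₁ L hLpos hdiff₁ hL₁ x (α • u)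
  have h1 : ⟪gradient f₁ x, α • u⟫ = α * ⟪gradient f₁ x, u⟫ := real_inner_smul_right _ _ _
  have h2 : ‖α • u‖ ^ 2 = α ^ 2 * ‖u‖ ^ 2 := by
    rw [norm_smul]; simp [abs_of_nonneg hα]; ring
  rw [h1, h2] at hmain
  have hunorm : 0 < ‖u‖ := norm_pos_iff.mpr hg₂
  have hpart1 : f₁ (x + α • u) ≥ f₁ x + α * ‖u‖ *
      (Real.sin Δ * ‖gradient f₁ x‖ - L * α / 2 * ‖u‖) := by
    nlinarith [hmain, mul_le_mul_of_nonneg_left hcone hα]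
  refine ⟨hpart1, fun hαle => ?_⟩
  have hLu : 0 < L * ‖u‖ := mul_pos hLpos hunorm
  have : α * (L * ‖u‖) ≤ 2 * Real.sin Δ * ‖gradient f₁ x‖ :=
    (le_div_iff₀ hLu).mp hαle
  have hfac : 0 ≤ Real.sin Δ * ‖gradient f₁ x‖ - L * α / 2 * ‖u‖ := by nlinarith
  nlinarith [mul_nonneg (mul_nonneg hα hunorm.le) hfac]
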